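/- The Frobenius-optimal circulant approximation c(T) of an n×n Toeplitz matrix T = [a_{k-j}] — i.e. the circulant matrix minimizing ‖T − C‖_F over all circulant C — has first-column entries c_k = ((n−k) a_k + k a_{k−n})/n for k = 0, 1, …, n−1. -/

import Mathlib

open Matrix

lemma realKey (p q x y xm t : ℝ) (hp : 0 ≤ p) (hq : 0 ≤ q)
    (hm : (p + q) * xm = p * x + q * y) :
    p * (x - xm)^2 + q * (y - xm)^2 ≤ p * (x - t)^2 + q * (y - t)^2 := by
  have hid : p * (x - t)^2 + q * (y - t)^2 - (p * (x - xm)^2 + q * (y - xm)^2)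
      = (p + q) * (xm - t)^2 := by linear_combination (2*t - 2*xm) * hm
  nlinarith [mul_nonneg (add_nonneg hp hq) (sq_nonneg (xm - t))]

lemma cKey (p q : ℕ) (A B w m : ℂ) (hm : ((p + q : ℕ) : ℂ) * m = p * A + q * B) :
    (p : ℝ) * Complex.normSq (A - m) + (q : ℝ) * Complex.normSq (B - m) ≤
    (p : ℝ) * Complex.normSq (A - w) + (q : ℝ) * Complex.normSq (B - w) := by
  have hre : ((p : ℝ) + q) * m.re = p * A.re + q * B.re := by
    have := congrArg Complex.re hm
    simpa [Complex.add_re, Complex.mul_re] using this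
  have him : ((p : ℝ) + q) * m.im = p * A.im + q * B.im := by
    have := congrArg Complex.im hm
    simpa [Complex.add_im, Complex.mul_im] using this
  have h1 := realKey p q A.re B.re m.re w.re (by positivity) (by positivity) hre
  have h2 := realKey p q A.im B.im m.im w.im (by positivity) (by positivity) him
  simp only [Complex.normSq_apply, Complex.sub_re, Complex.sub_im]
  nlinarith [h1, h2]

lemma countSum (n m : ℕ) (hm : m ≤ n) (A B : ℝ) :
    ∑ j : Fin n, (if j.val < m then A else B) = m * A + (n - m : ℕ) * B := by
  rw [Fin.sum_univ_eq_sum_range (fun i => if i < m then A else B) n]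
  rw [Finset.range_eq_Ico, ← Finset.sum_Ico_consecutive _ (Nat.zero_le m) hm]
  rw [Finset.sum_congr rfl (fun i hi => if_pos (Finset.mem_Ico.mp hi).2),
      Finset.sum_congr rfl (g := fun _ => B) (fun i hi => if_neg (by simpa using Nat.not_lt.mpr (Finset.mem_Ico.mp hi).1))]
  simp [mul_comm]

lemma regroup (n : ℕ) (hn : 0 < n) (a : ℤ → ℂ) (u : Fin n → ℂ) :
    ∑ i : Fin n, ∑ j : Fin n,
        Complex.normSq (a ((i.val : ℤ) - (j.val : ℤ)) - u (i - j)) =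
    ∑ k : Fin n, (((n - k.val : ℕ) : ℝ) * Complex.normSq (a k.val - u k)
      + ((k.val : ℕ) : ℝ) * Complex.normSq (a ((k.val : ℤ) - n) - u k)) := by
  haveI : NeZero n := ⟨hn.ne'⟩
  rw [Finset.sum_comm]
  have step1 : ∀ j : Fin n,
      ∑ i : Fin n, Complex.normSq (a ((i.val : ℤ) - (j.val : ℤ)) - u (i - j)) =
      ∑ k : Fin n, Complex.normSq (a (((k + j).val : ℤ) - (j.val : ℤ)) - u k) := by
    intro j
    refine (Fintype.sum_equiv (Equiv.addRight j)
      (fun k => Complex.normSq (a (((k + j).val : ℤ) - (j.val : ℤ)) - u k))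
      (fun i => Complex.normSq (a ((i.val : ℤ) - (j.val : ℤ)) - u (i - j)))
      (fun k => by simp)).symm
  simp only [step1]
  rw [Finset.sum_comm]
  refine Finset.sum_congr rfl (fun k _ => ?_)
  have hterm : ∀ j : Fin n,
      Complex.normSq (a (((k + j).val : ℤ) - (j.val : ℤ)) - u k) =
      if j.val < n - k.val then Complex.normSq (a k.val - u k)
      else Complex.normSq (a ((k.val : ℤ) - n) - u k) := by
    intro j
    have hv : (k + j).val = (k.val + j.val) % n := Fin.val_add k j
    by_cases h : j.val < n - k.val
    · have hlt : k.val + j.val < n := by omega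
      have hc : ((k.val + j.val : ℕ) : ℤ) - (j.val : ℤ) = (k.val : ℤ) := by push_cast; ring
      rw [if_pos h, hv, Nat.mod_eq_of_lt hlt, hc]
    · have h1 : n ≤ k.val + j.val := by have := k.isLt; omega
      have h2 : (k.val + j.val) % n = k.val + j.val - n := by
        rw [Nat.mod_eq_sub_mod h1, Nat.mod_eq_of_lt (by have := k.isLt; have := j.isLt; omega)]
      have hc : ((k.val + j.val - n : ℕ) : ℤ) - (j.val : ℤ) = (k.val : ℤ) - (n : ℤ) := by omega
      rw [if_neg h, hv, h2, hc]
  simp only [hterm]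
  rw [countSum n (n - k.val) (Nat.sub_le n k.val) _ _, Nat.sub_sub_self k.isLt.le]

theorem frobenius_optimal_circulant (n : ℕ) (hn : 0 < n) (a : ℤ → ℂ) :
    ∀ v : Fin n → ℂ,
      Real.sqrt (∑ i : Fin n, ∑ j : Fin n,
          ‖(Matrix.of (fun k l : Fin n => a ((k.val : ℤ) - (l.val : ℤ))) -
            Matrix.circulant (fun k : Fin n =>
              (((n : ℂ) - k.val) * a k.val + (k.val : ℂ) * a ((k.val : ℤ) - n)) / n)) i j‖ ^ 2) ≤
      Real.sqrt (∑ i : Fin n, ∑ j : Fin n,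
          ‖(Matrix.of (fun k l : Fin n => a ((k.val : ℤ) - (l.val : ℤ))) -
            Matrix.circulant v) i j‖ ^ 2) := by
  intro v
  haveI : NeZero n := ⟨hn.ne'⟩
  apply Real.sqrt_le_sqrt
  simp only [Matrix.sub_apply, Matrix.of_apply, Matrix.circulant_apply, Complex.sq_norm]
  set c : Fin n → ℂ := fun k : Fin n =>
    (((n : ℂ) - k.val) * a k.val + (k.val : ℂ) * a ((k.val : ℤ) - n)) / n with hc
  show ∑ i : Fin n, ∑ j : Fin n, Complex.normSq (a ((i.val : ℤ) - (j.val : ℤ)) - c (i - j)) ≤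
      ∑ i : Fin n, ∑ j : Fin n, Complex.normSq (a ((i.val : ℤ) - (j.val : ℤ)) - v (i - j))
  rw [regroup n hn a c, regroup n hn a v]
  refine Finset.sum_le_sum (fun k _ => ?_)
  refine cKey (n - k.val) k.val _ _ (v k) (c k) ?_
  rw [hc]
  have hnk : ((n - k.val : ℕ) : ℂ) = (n : ℂ) - (k.val : ℂ) := by
    push_cast [Nat.cast_sub k.isLt.le]; ring
  rw [Nat.sub_add_cancel k.isLt.le, hnk]
  have hne : (n : ℂ) ≠ 0 := Nat.cast_ne_zero.mpr hn.ne'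
  field_simp
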